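/- For every integer n ≥ 1, the expected number of vertices of G_1^n that have a loop, degree 2, and second degree 0 satisfies E[P_n(2,0)] = n/(2n−1); in particular E[P_n(2,0)] ≤ 1. -/

import Mathlib

open scoped Classical

/-!
The Bollobás–Riordan random graph `G_1^n` (case `m = 1`), with vertices `0, …, n-1`
(0-indexed).  A realization is encoded by a map `f : ℕ → ℕ`, where for each `t < n`
the graph contains the edge `{t, f t}` (a loop at `t` when `f t = t`); only maps with
`f t ≤ t` get positive probability.  The degree of `s` is then
`[s < n] + #{u < n : f u = s}` (a loop contributing 2).  The vertex `t` (1-indexed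
`t+1`) chooses its neighbor `f t` preferentially: an existing vertex `s < t` with
probability `deg(s)/(2(t+1)-1)` (degree in the current graph on `0, …, t-1`), and
itself (forming a loop) with probability `1/(2(t+1)-1)`.
-/

/-- Probability weight of the choice made when vertex `t` (0-indexed) is added:
it attaches to `f t`. The current degree of a vertex `s < t` in the graph with
edges `{u, f u}`, `u < t`, equals `1 + #{u < t : f u = s}`. -/
noncomputable def brStepWeight (f : ℕ → ℕ) (t : ℕ) : ℝ :=
  (if f t = t then 1
   else if f t < t then
     (1 + (((Finset.range t).filter (fun u => f u = f t)).card : ℝ))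
   else 0) / (2 * (t : ℝ) + 1)

/-- Probability of the realization `f` of `G_1^n`. -/
noncomputable def brProb (n : ℕ) (f : ℕ → ℕ) : ℝ :=
  ∏ t ∈ Finset.range n, brStepWeight f t

/-- Extend a finitary configuration to a map `ℕ → ℕ`. -/
def brExt (n : ℕ) (f : Fin n → Fin n) : ℕ → ℕ :=
  fun t => if h : t < n then (f ⟨t, h⟩ : ℕ) else 0

/-- Expectation of a functional `g` of the random graph `G_1^n`. -/
noncomputable def brExpect (n : ℕ) (g : (ℕ → ℕ) → ℝ) : ℝ :=
  ∑ f : Fin n → Fin n, brProb n (brExt n f) * g (brExt n f)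

/-- Probability of an event `A` for the random graph `G_1^n`. -/
noncomputable def brProbEvent (n : ℕ) (A : (ℕ → ℕ) → Prop) : ℝ :=
  brExpect n (fun f => if A f then 1 else 0)

/-- Degree of the vertex `s` in `G_1^n` (a loop contributes 2). -/
def brDeg (n : ℕ) (f : ℕ → ℕ) (s : ℕ) : ℕ :=
  (if s < n then 1 else 0) + ((Finset.range n).filter (fun u => f u = s)).card

/-- `a` and `b` are joined by an edge of `G_1^n`. -/
def brAdj (n : ℕ) (f : ℕ → ℕ) (a b : ℕ) : Prop :=
  ∃ u ∈ Finset.range n, (u = a ∧ f u = b) ∨ (u = b ∧ f u = a)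

/-- Second degree of the vertex `t` in `G_1^n`: the number of edges `ij` with
`i ≠ t`, `j ≠ t`, `it ∈ G_1^n`, `ij ∈ G_1^n` — i.e. the number of edges adjacent to
neighbors of `t`, excluding the edges adjacent to `t` itself.  In this multigraph
count, each edge `ij` (with indeterminate `i`, `j`) is counted once for each of its
endpoints that is a neighbor of `t`; in particular a loop at a neighbor of `t`
contributes `2`, so that `d_2(t) = Σ_{u ~ t, u ≠ t} d(u) − (d(t) − 2·#loops at t)`,
as used throughout the paper (e.g. a vertex of degree `1` with neighbor `q` has
second degree `d(q) − 1`). -/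
noncomputable def brD2 (n : ℕ) (f : ℕ → ℕ) (t : ℕ) : ℕ :=
  ∑ v ∈ Finset.range n,
    ((if v ≠ t ∧ f v ≠ t ∧ brAdj n f v t then 1 else 0) +
     (if v ≠ t ∧ f v ≠ t ∧ brAdj n f (f v) t then 1 else 0))

/-- `X_n(k)`: the number of vertices of `G_1^n` with second degree `k`. -/
noncomputable def brX (n k : ℕ) (f : ℕ → ℕ) : ℕ :=
  ((Finset.range n).filter (fun t => brD2 n f t = k)).card

/-- `N_n(l,k)`: the number of vertices of `G_1^n` with degree `l`, second degree `k`,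
and no loop. -/
noncomputable def brNcount (n l k : ℕ) (f : ℕ → ℕ) : ℕ :=
  ((Finset.range n).filter
    (fun t => brDeg n f t = l ∧ brD2 n f t = k ∧ f t ≠ t)).card

/-- `P_n(l,k)`: the number of vertices of `G_1^n` with a loop, degree `l`, and
second degree `k`. -/
noncomputable def brPcount (n l k : ℕ) (f : ℕ → ℕ) : ℕ :=
  ((Finset.range n).filter
    (fun t => brDeg n f t = l ∧ brD2 n f t = k ∧ f t = t)).card

/-- `M_n^2(k)`: the expected number of vertices of `G_1^n` with second degree `k`. -/
noncomputable def M2 (n k : ℕ) : ℝ := brExpect n (fun f => (brX n k f : ℝ))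

/-- `M_n^1(d)`: the expected number of vertices of `G_1^n` with degree `d`. -/
noncomputable def M1 (n d : ℕ) : ℝ :=
  brExpect n (fun f => (((Finset.range n).filter (fun t => brDeg n f t = d)).card : ℝ))

/-- `E[N_n(l,k)]`. -/
noncomputable def EN (n l k : ℕ) : ℝ := brExpect n (fun f => (brNcount n l k f : ℝ))

/-- `E[P_n(l,k)]`. -/
noncomputable def EP (n l k : ℕ) : ℝ := brExpect n (fun f => (brPcount n l k f : ℝ))

/-! ### Auxiliary development -/

/-- The finite support of the random graph: maps `f` with `f t ≤ t` for `t < n`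
and `f t = 0` for `t ≥ n`. -/
noncomputable def Funs : ℕ → Finset (ℕ → ℕ)
  | 0 => {fun _ => 0}
  | n+1 => ((Funs n) ×ˢ Finset.range (n+1)).image (fun p => Function.update p.1 n p.2)

lemma mem_Funs {n : ℕ} {f : ℕ → ℕ} :
    f ∈ Funs n ↔ (∀ t, n ≤ t → f t = 0) ∧ (∀ t, t < n → f t ≤ t) := by
  induction n generalizing f with
  | zero =>
    simp only [Funs, Finset.mem_singleton]
    constructor
    · rintro rfl
      exact ⟨fun t _ => rfl, fun t ht => by omega⟩
    · rintro ⟨h1, _⟩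
      funext t; exact h1 t (Nat.zero_le t)
  | succ n ih =>
    simp only [Funs, Finset.mem_image, Finset.mem_product, Finset.mem_range, Prod.exists]
    constructor
    · rintro ⟨h, s, ⟨hh, hs⟩, rfl⟩
      rw [ih] at hh
      refine ⟨fun u hu => ?_, fun u hu => ?_⟩
      · rw [Function.update_of_ne (by omega)]
        exact hh.1 u (by omega)
      · rcases eq_or_ne u n with rfl | hne
        · rw [Function.update_self]; omega
        · rw [Function.update_of_ne hne]; exact hh.2 u (by omega)
    · rintro ⟨h1, h2⟩
      refine ⟨Function.update f n 0, f n, ⟨ih.2 ⟨fun u hu => ?_, fun u hu => ?_⟩,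
        by have := h2 n (by omega); omega⟩, ?_⟩
      · rcases eq_or_ne u n with rfl | hne
        · rw [Function.update_self]
        · rw [Function.update_of_ne hne]; exact h1 u (by omega)
      · rw [Function.update_of_ne (by omega)]; exact h2 u (by omega)
      · funext u
        rcases eq_or_ne u n with rfl | hne
        · rw [Function.update_self]
        · rw [Function.update_of_ne hne, Function.update_of_ne hne]

lemma stepWeight_congr {f g : ℕ → ℕ} {t : ℕ} (h : ∀ u, u ≤ t → f u = g u) :
    brStepWeight f t = brStepWeight g t := by
  have h1 : f t = g t := h t le_rfl
  have h2 : (Finset.range t).filter (fun u => f u = f t) =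
      (Finset.range t).filter (fun u => g u = g t) := by
    apply Finset.filter_congr
    intro u hu
    rw [h u (le_of_lt (Finset.mem_range.1 hu)), h1]
  simp only [brStepWeight]
  rw [h2, h1]

lemma prob_update {n s : ℕ} {h : ℕ → ℕ} :
    brProb n (Function.update h n s) = brProb n h := by
  unfold brProb
  apply Finset.prod_congr rfl
  intro t ht
  apply stepWeight_congr
  intro u hu
  exact Function.update_of_ne (by have := Finset.mem_range.1 ht; omega) _ _

lemma prob_succ {n : ℕ} {f : ℕ → ℕ} :
    brProb (n+1) f = brProb n f * brStepWeight f n :=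
  Finset.prod_range_succ _ _

lemma sum_Funs_succ {n : ℕ} (g : (ℕ → ℕ) → ℝ) :
    ∑ f ∈ Funs (n+1), g f =
      ∑ h ∈ Funs n, ∑ s ∈ Finset.range (n+1), g (Function.update h n s) := by
  rw [show Funs (n+1) = ((Funs n) ×ˢ Finset.range (n+1)).image
      (fun p => Function.update p.1 n p.2) from rfl]
  rw [Finset.sum_image, Finset.sum_product]
  intro p hp q hq hpq
  have hs : p.2 = q.2 := by
    have := congrFun hpq n
    simpa using this
  have hmem := (mem_Funs.1 (Finset.mem_product.1 hp).1).1
  have hmem' := (mem_Funs.1 (Finset.mem_product.1 hq).1).1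
  have hh : p.1 = q.1 := by
    funext u
    rcases eq_or_ne u n with rfl | hne
    · rw [hmem u le_rfl, hmem' u le_rfl]
    · have := congrFun hpq u
      beta_reduce at this
      rwa [Function.update_of_ne hne, Function.update_of_ne hne] at this
  exact Prod.ext hh hs

lemma count_sum {n : ℕ} {h : ℕ → ℕ} (hh : ∀ u, u < n → h u < n) :
    ∑ s ∈ Finset.range n, ((Finset.range n).filter (fun u => h u = s)).card = n := by
  have e : ∀ s, ((Finset.range n).filter (fun u => h u = s)).card =
      ∑ u ∈ Finset.range n, if h u = s then 1 else 0 := fun s => Finset.card_filter _ _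
  simp only [e]
  rw [Finset.sum_comm]
  have e2 : ∀ u ∈ Finset.range n,
      (∑ s ∈ Finset.range n, if h u = s then 1 else 0) = 1 := by
    intro u hu
    rw [Finset.sum_ite_eq (Finset.range n) (h u) (fun _ => 1)]
    simp [hh u (Finset.mem_range.1 hu)]
  rw [Finset.sum_congr rfl e2, Finset.sum_const, Finset.card_range, smul_eq_mul, mul_one]

lemma weight_update {n s : ℕ} {h : ℕ → ℕ} (hs : s ≤ n) :
    brStepWeight (Function.update h n s) n =
      (if s = n then 1
        else (1 + (((Finset.range n).filter (fun u => h u = s)).card : ℝ)))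
        / (2 * (n : ℝ) + 1) := by
  unfold brStepWeight
  rw [Function.update_self]
  rcases eq_or_ne s n with rfl | hne
  · simp
  · have hlt : s < n := lt_of_le_of_ne hs hne
    rw [if_neg hne, if_neg hne, if_pos hlt]
    have e : (Finset.range n).filter (fun u => Function.update h n s u = s) =
        (Finset.range n).filter (fun u => h u = s) := by
      apply Finset.filter_congr
      intro u hu
      rw [Function.update_of_ne (by have := Finset.mem_range.1 hu; omega)]
    rw [e]

lemma sum_weights {n : ℕ} {h : ℕ → ℕ} (hh : h ∈ Funs n) :
    ∑ s ∈ Finset.range (n+1), brStepWeight (Function.update h n s) n = 1 := by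
  have key : ∀ s ∈ Finset.range (n+1), brStepWeight (Function.update h n s) n =
      (if s = n then 1
        else (1 + (((Finset.range n).filter (fun u => h u = s)).card : ℝ)))
        / (2 * (n : ℝ) + 1) := by
    intro s hs
    exact weight_update (by have := Finset.mem_range.1 hs; omega)
  rw [Finset.sum_congr rfl key, ← Finset.sum_div, Finset.sum_range_succ, if_pos rfl]
  have hc : ∑ s ∈ Finset.range n,
      (if s = n then (1:ℝ)
        else (1 + (((Finset.range n).filter (fun u => h u = s)).card : ℝ))) =
      2 * (n : ℝ) := by
    have e : ∀ s ∈ Finset.range n,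
        (if s = n then (1:ℝ)
          else (1 + (((Finset.range n).filter (fun u => h u = s)).card : ℝ))) =
        1 + (((Finset.range n).filter (fun u => h u = s)).card : ℝ) := by
      intro s hs
      rw [if_neg (by have := Finset.mem_range.1 hs; omega)]
    rw [Finset.sum_congr rfl e, Finset.sum_add_distrib, Finset.sum_const,
      Finset.card_range]
    have hcount : ∑ s ∈ Finset.range n,
        (((Finset.range n).filter (fun u => h u = s)).card : ℝ) = (n : ℝ) := by
      rw [← Nat.cast_sum]
      norm_cast
      exact count_sum (fun u hu => lt_of_le_of_lt ((mem_Funs.1 hh).2 u hu) hu)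
    rw [hcount]
    ring
  rw [hc]
  have hpos : (2 : ℝ) * n + 1 ≠ 0 := by positivity
  field_simp

lemma mass : ∀ n, ∑ f ∈ Funs n, brProb n f = 1 := by
  intro n
  induction n with
  | zero =>
    rw [show Funs 0 = {fun _ => 0} from rfl, Finset.sum_singleton]
    simp [brProb]
  | succ n ih =>
    rw [sum_Funs_succ]
    have e : ∀ h ∈ Funs n, ∑ s ∈ Finset.range (n+1), brProb (n+1) (Function.update h n s)
        = brProb n h := by
      intro h hh
      have e2 : ∀ s ∈ Finset.range (n+1), brProb (n+1) (Function.update h n s) =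
          brProb n h * brStepWeight (Function.update h n s) n := by
        intro s _
        rw [prob_succ, prob_update]
      rw [Finset.sum_congr rfl e2, ← Finset.mul_sum, sum_weights hh, mul_one]
    rw [Finset.sum_congr rfl e, ih]

/-- The event: `t` has a loop and no other vertex attaches to it. -/
def Ev (n t : ℕ) (f : ℕ → ℕ) : Prop :=
  f t = t ∧ ∀ u, u < n → u ≠ t → f u ≠ t

lemma filter_eq_singleton {n t : ℕ} {f : ℕ → ℕ} (ht : t < n) (hEv : Ev n t f) :
    (Finset.range n).filter (fun u => f u = t) = {t} := by
  ext u
  simp only [Finset.mem_filter, Finset.mem_range, Finset.mem_singleton]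
  constructor
  · rintro ⟨hu, hut⟩
    by_contra hne
    exact hEv.2 u hu hne hut
  · rintro rfl
    exact ⟨ht, hEv.1⟩

lemma A_val (t : ℕ) : ∀ n, t < n →
    ∑ f ∈ Funs n, brProb n f * (if Ev n t f then (1:ℝ) else 0) =
      1 / (2 * (n : ℝ) - 1) := by
  intro n
  induction n with
  | zero => omega
  | succ n ih =>
    intro ht
    rw [sum_Funs_succ]
    have hcast : (2 * ((n:ℝ) + 1) - 1) = 2 * (n:ℝ) + 1 := by ring
    rcases eq_or_lt_of_le (Nat.lt_succ_iff.1 ht) with rfl | htn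
    · -- base case t = n
      have e : ∀ h ∈ Funs t, ∑ s ∈ Finset.range (t+1),
          brProb (t+1) (Function.update h t s) *
            (if Ev (t+1) t (Function.update h t s) then (1:ℝ) else 0)
          = brProb t h * (1 / (2 * (t : ℝ) + 1)) := by
        intro h hh
        have e2 : ∀ s ∈ Finset.range (t+1),
            brProb (t+1) (Function.update h t s) *
              (if Ev (t+1) t (Function.update h t s) then (1:ℝ) else 0) =
            if s = t then brProb t h * (1 / (2 * (t : ℝ) + 1)) else 0 := by
          intro s hs
          have hsle : s ≤ t := by have := Finset.mem_range.1 hs; omega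
          have hEviff : Ev (t+1) t (Function.update h t s) ↔ s = t := by
            constructor
            · rintro ⟨h1, _⟩
              rwa [Function.update_self] at h1
            · rintro rfl
              refine ⟨Function.update_self _ _ _, fun u hu hne => ?_⟩
              rw [Function.update_of_ne hne]
              have := (mem_Funs.1 hh).2 u (by omega)
              omega
          rcases eq_or_ne s t with rfl | hne
          · rw [if_pos rfl, if_pos (hEviff.2 rfl), mul_one, prob_succ, prob_update,
              weight_update le_rfl, if_pos rfl]
          · rw [if_neg hne, if_neg (fun hEv => hne (hEviff.1 hEv)), mul_zero]
        rw [Finset.sum_congr rfl e2, Finset.sum_ite_eq' (Finset.range (t+1)) t,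
          if_pos (Finset.mem_range.2 (by omega))]
      rw [Finset.sum_congr rfl e, ← Finset.sum_mul, mass]
      push_cast
      rw [hcast, one_mul]
    · -- inductive step t < n
      have hne_nt : n ≠ t := by omega
      have e : ∀ h ∈ Funs n, ∑ s ∈ Finset.range (n+1),
          brProb (n+1) (Function.update h n s) *
            (if Ev (n+1) t (Function.update h n s) then (1:ℝ) else 0)
          = brProb n h * (if Ev n t h then (1:ℝ) else 0) *
              ((2 * (n:ℝ) - 1) / (2 * (n:ℝ) + 1)) := by
        intro h hh
        have hEviff : ∀ s, Ev (n+1) t (Function.update h n s) ↔ (Ev n t h ∧ s ≠ t) := by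
          intro s
          constructor
          · rintro ⟨h1, h2⟩
            rw [Function.update_of_ne (by omega)] at h1
            refine ⟨⟨h1, fun u hu hune hfut => ?_⟩, fun hst => ?_⟩
            · exact h2 u (by omega) hune (by rwa [Function.update_of_ne (by omega)])
            · exact h2 n (by omega) hne_nt (by rw [Function.update_self, hst])
          · rintro ⟨⟨h1, h2⟩, hst⟩
            refine ⟨by rwa [Function.update_of_ne (by omega)], fun u hu hune => ?_⟩
            rcases eq_or_ne u n with rfl | hun
            · rwa [Function.update_self]
            · rw [Function.update_of_ne hun]
              exact h2 u (by omega) hune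
        by_cases hEv : Ev n t h
        · have e2 : ∀ s ∈ Finset.range (n+1),
              brProb (n+1) (Function.update h n s) *
                (if Ev (n+1) t (Function.update h n s) then (1:ℝ) else 0) =
              brProb n h * (brStepWeight (Function.update h n s) n
                - (if s = t then brStepWeight (Function.update h n s) n else 0)) := by
            intro s _
            rw [prob_succ, prob_update]
            rcases eq_or_ne s t with rfl | hst
            · rw [if_pos rfl, if_neg (fun hE => ((hEviff _).1 hE).2 rfl)]
              ring
            · rw [if_neg hst, if_pos ((hEviff s).2 ⟨hEv, hst⟩)]
              ring
          rw [Finset.sum_congr rfl e2, ← Finset.mul_sum, Finset.sum_sub_distrib,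
            sum_weights hh, Finset.sum_ite_eq' (Finset.range (n+1)) t,
            if_pos (Finset.mem_range.2 (by omega))]
          have hwt : brStepWeight (Function.update h n t) n = 2 / (2 * (n:ℝ) + 1) := by
            rw [weight_update (by omega), if_neg (by omega),
              filter_eq_singleton htn hEv]
            norm_num
          rw [hwt, if_pos hEv, mul_one]
          congr 1
          have hpos : (2 : ℝ) * n + 1 ≠ 0 := by positivity
          field_simp
          ring
        · have e2 : ∀ s ∈ Finset.range (n+1),
              brProb (n+1) (Function.update h n s) *
                (if Ev (n+1) t (Function.update h n s) then (1:ℝ) else 0) = 0 := by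
            intro s _
            rw [if_neg (fun hE => hEv ((hEviff s).1 hE).1), mul_zero]
          rw [Finset.sum_congr rfl e2, Finset.sum_const, smul_zero, if_neg hEv]
          ring
      rw [Finset.sum_congr rfl e, ← Finset.sum_mul, ih htn]
      have h1 : (2 * (n:ℝ) - 1) ≠ 0 := by
        have : (1:ℝ) ≤ n := by exact_mod_cast Nat.one_le_iff_ne_zero.2 (by omega)
        nlinarith
      have h2 : (2 * (n:ℝ) + 1) ≠ 0 := by positivity
      push_cast
      rw [hcast]
      field_simp

lemma Ev_d2 {n t : ℕ} {f : ℕ → ℕ} (ht : t < n) (hEv : Ev n t f) :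
    brD2 n f t = 0 := by
  have key : ∀ u, u < n → f u = t → u = t := by
    intro u hu hut
    by_contra hne
    exact hEv.2 u hu hne hut
  unfold brD2
  apply Finset.sum_eq_zero
  intro v _
  have h1 : ¬ (v ≠ t ∧ f v ≠ t ∧ brAdj n f v t) := by
    rintro ⟨hv1, hv2, u, hu, h⟩
    rcases h with ⟨rfl, h2⟩ | ⟨rfl, h2⟩
    · exact hv2 h2
    · exact hv1 (h2 ▸ hEv.1.symm ▸ rfl)
  have h2 : ¬ (v ≠ t ∧ f v ≠ t ∧ brAdj n f (f v) t) := by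
    rintro ⟨hv1, hv2, u, hu, h⟩
    rcases h with ⟨rfl, h2⟩ | ⟨rfl, h2⟩
    · exact hv2 (key (f v) (Finset.mem_range.1 hu) h2)
    · exact hv2 (hEv.1 ▸ h2.symm)
  rw [if_neg h1, if_neg h2, add_zero]

lemma condition_iff {n t : ℕ} {f : ℕ → ℕ} (ht : t < n) :
    (brDeg n f t = 2 ∧ brD2 n f t = 0 ∧ f t = t) ↔ Ev n t f := by
  constructor
  · rintro ⟨hdeg, _, hloop⟩
    rw [brDeg, if_pos ht] at hdeg
    have hcard : ((Finset.range n).filter (fun u => f u = t)).card = 1 := by omega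
    obtain ⟨a, ha⟩ := Finset.card_eq_one.1 hcard
    have hta : t = a := by
      have : t ∈ (Finset.range n).filter (fun u => f u = t) :=
        Finset.mem_filter.2 ⟨Finset.mem_range.2 ht, hloop⟩
      rw [ha] at this
      exact Finset.mem_singleton.1 this
    refine ⟨hloop, fun u hu hune hfut => ?_⟩
    have : u ∈ (Finset.range n).filter (fun u => f u = t) :=
      Finset.mem_filter.2 ⟨Finset.mem_range.2 hu, hfut⟩
    rw [ha, Finset.mem_singleton] at this
    exact hune (this.trans hta.symm)
  · intro hEv
    refine ⟨?_, Ev_d2 ht hEv, hEv.1⟩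
    rw [brDeg, if_pos ht, filter_eq_singleton ht hEv, Finset.card_singleton]

lemma brExpect_eq_sum_Funs {n : ℕ} (g : (ℕ → ℕ) → ℝ) :
    brExpect n g = ∑ f ∈ Funs n, brProb n f * g f := by
  unfold brExpect
  rw [← Finset.sum_filter_add_sum_filter_not Finset.univ
    (fun f : Fin n → Fin n => ∀ t : Fin n, (f t : ℕ) ≤ (t : ℕ))]
  have hbad : ∑ f ∈ Finset.univ.filter
      (fun f : Fin n → Fin n => ¬ ∀ t : Fin n, (f t : ℕ) ≤ (t : ℕ)),
      brProb n (brExt n f) * g (brExt n f) = 0 := by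
    apply Finset.sum_eq_zero
    intro f hf
    obtain ⟨t, ht⟩ := not_forall.1 (Finset.mem_filter.1 hf).2
    have hval : brExt n f (t : ℕ) = (f t : ℕ) := by
      rw [brExt, dif_pos t.isLt]
    have hw : brStepWeight (brExt n f) (t : ℕ) = 0 := by
      rw [brStepWeight, hval, if_neg (by omega), if_neg (by omega), zero_div]
    have : brProb n (brExt n f) = 0 :=
      Finset.prod_eq_zero (Finset.mem_range.2 t.isLt) hw
    rw [this, zero_mul]
  rw [hbad, add_zero]
  apply Finset.sum_bij (fun (f : Fin n → Fin n) _ => brExt n f)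
  · intro f hf
    rw [mem_Funs]
    have hf' := (Finset.mem_filter.1 hf).2
    refine ⟨fun u hu => ?_, fun u hu => ?_⟩
    · rw [brExt, dif_neg (by omega)]
    · rw [brExt, dif_pos hu]
      exact hf' ⟨u, hu⟩
  · intro f _ f' _ hff
    funext t
    have := congrFun hff (t : ℕ)
    rw [brExt, dif_pos t.isLt, brExt, dif_pos t.isLt] at this
    exact Fin.ext this
  · intro f hf
    rw [mem_Funs] at hf
    refine ⟨fun t => ⟨f t, lt_of_le_of_lt (hf.2 t t.isLt) t.isLt⟩,
      Finset.mem_filter.2 ⟨Finset.mem_univ _, fun t => hf.2 t t.isLt⟩, ?_⟩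
    funext u
    rcases Nat.lt_or_ge u n with hu | hu
    · rw [brExt, dif_pos hu]
    · rw [brExt, dif_neg (by omega)]
      exact (hf.1 u hu).symm
  · intro f _
    rfl

/-- For every `n ≥ 1`, `E[P_n(2,0)] = n/(2n−1)`; in particular `E[P_n(2,0)] ≤ 1`. -/
theorem expectation_P_two_zero :
    ∀ n : ℕ, 1 ≤ n →
      EP n 2 0 = (n : ℝ) / (2 * (n : ℝ) - 1) ∧ EP n 2 0 ≤ 1 := by
  intro n hn
  have key : EP n 2 0 = (n : ℝ) / (2 * (n : ℝ) - 1) := by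
    rw [EP, brExpect_eq_sum_Funs]
    have hcount : ∀ f : ℕ → ℕ, ((brPcount n 2 0 f : ℝ)) =
        ∑ t ∈ Finset.range n,
          (if brDeg n f t = 2 ∧ brD2 n f t = 0 ∧ f t = t then (1:ℝ) else 0) := by
      intro f
      rw [brPcount, Finset.card_filter]
      push_cast
      rfl
    simp only [hcount, Finset.mul_sum]
    rw [Finset.sum_comm]
    have e : ∀ t ∈ Finset.range n, ∑ f ∈ Funs n,
        brProb n f * (if brDeg n f t = 2 ∧ brD2 n f t = 0 ∧ f t = t then (1:ℝ) else 0)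
        = 1 / (2 * (n:ℝ) - 1) := by
      intro t ht
      have ht' := Finset.mem_range.1 ht
      have e2 : ∀ f ∈ Funs n,
          brProb n f * (if brDeg n f t = 2 ∧ brD2 n f t = 0 ∧ f t = t then (1:ℝ) else 0)
          = brProb n f * (if Ev n t f then (1:ℝ) else 0) := by
        intro f _
        congr 1
        simp only [condition_iff ht']
      rw [Finset.sum_congr rfl e2]
      exact A_val t n ht'
    rw [Finset.sum_congr rfl e, Finset.sum_const, Finset.card_range, nsmul_eq_mul,
      mul_one_div]
  exact ⟨key, by
    rw [key]
    rw [div_le_one (by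
      have : (1:ℝ) ≤ n := by exact_mod_cast hn
      linarith)]
    have : (1:ℝ) ≤ n := by exact_mod_cast hn
    linarith⟩
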